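/- Let k₁, k₂, k₃ ∈ ℤ, j₁, j₂, j₃ ∈ ℤ₊ and suppose f₁, f₂, f₃ ∈ L²(ℝ²) with fᵢ supported in I_{kᵢ} × Ĩ_{jᵢ}. Set k̃ = min(k₁,k₂,k₃) + med(k₁,k₂,k₃). If J(f₁,f₂,f₃) ≠ 0 then either max(j₁,j₂,j₃) ∈ [k̃-5, k̃+5], or max(j₁,j₂,j₃) ≥ k̃+5 and max(j₁,j₂,j₃) - med(j₁,j₂,j₃) ≤ 5. -/

import Mathlib

open MeasureTheory

noncomputable section

/-- Benjamin–Ono dispersion relation. -/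
def ω (ξ : ℝ) : ℝ := -ξ * |ξ|

/-- Resonance function. -/
def Ωres (ξ₁ ξ₂ : ℝ) : ℝ := -ω (ξ₁ + ξ₂) + ω ξ₁ + ω ξ₂

/-- Dyadic frequency annulus `I_k`. -/
def Idy (k : ℤ) : Set ℝ := {ξ : ℝ | (2 : ℝ) ^ (k - 1) ≤ |ξ| ∧ |ξ| ≤ (2 : ℝ) ^ (k + 1)}

/-- Modified dyadic interval `Ĩ_j`. -/
def Itil (j : ℕ) : Set ℝ := if j = 0 then Set.Icc (-2 : ℝ) 2 else Idy (j : ℤ)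

/-- The trilinear convolution-type form `J`. -/
def J (f g h : ℝ × ℝ → ℂ) : ℂ :=
  ∫ ξ₁ : ℝ, ∫ ξ₂ : ℝ, ∫ μ₁ : ℝ, ∫ μ₂ : ℝ,
    f (ξ₁, μ₁) * g (ξ₂, μ₂) * h (ξ₁ + ξ₂, μ₁ + μ₂ + Ωres ξ₁ ξ₂)

/-- The `L²` norm (as a real number) of a function on `ℝ²`. -/
def L2norm (f : ℝ × ℝ → ℂ) : ℝ := (eLpNorm f 2 volume).toReal

lemma exists_ne_zero_of_integral_ne_zero {F : ℝ → ℂ} (h : (∫ x, F x) ≠ 0) :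
    ∃ x, F x ≠ 0 := by
  by_contra hc
  push_neg at hc
  exact h (by simp [hc])

lemma Ωres_abs (ξ₁ ξ₂ : ℝ) :
    |Ωres ξ₁ ξ₂| = 2 * min (|ξ₁| * |ξ₂|) (min (|ξ₁| * |ξ₁ + ξ₂|) (|ξ₂| * |ξ₁ + ξ₂|)) := by
  have hΩ : Ωres ξ₁ ξ₂ = (ξ₁+ξ₂)*|ξ₁+ξ₂| - ξ₁*|ξ₁| - ξ₂*|ξ₂| := by
    simp only [Ωres, ω]; ring
  rcases le_total 0 ξ₁ with h1 | h1 <;> rcases le_total 0 ξ₂ with h2 | h2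
  · have hs : 0 ≤ ξ₁ + ξ₂ := by linarith
    rw [hΩ, abs_of_nonneg h1, abs_of_nonneg h2, abs_of_nonneg hs,
      min_eq_left (le_min (by nlinarith) (by nlinarith)),
      abs_of_nonneg (by nlinarith)]
    ring
  · rcases le_total 0 (ξ₁ + ξ₂) with hs | hs
    · rw [hΩ, abs_of_nonneg h1, abs_of_nonpos h2, abs_of_nonneg hs,
        min_eq_right (by nlinarith : -ξ₂ * (ξ₁+ξ₂) ≤ ξ₁ * (ξ₁+ξ₂)),
        min_eq_right (by nlinarith : -ξ₂ * (ξ₁+ξ₂) ≤ ξ₁ * -ξ₂),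
        abs_of_nonpos (by nlinarith)]
      ring
    · rw [hΩ, abs_of_nonneg h1, abs_of_nonpos h2, abs_of_nonpos hs,
        min_eq_left (by nlinarith : ξ₁ * -(ξ₁+ξ₂) ≤ -ξ₂ * -(ξ₁+ξ₂)),
        min_eq_right (by nlinarith : ξ₁ * -(ξ₁+ξ₂) ≤ ξ₁ * -ξ₂),
        abs_of_nonneg (by nlinarith)]
      ring
  · rcases le_total 0 (ξ₁ + ξ₂) with hs | hs
    · rw [hΩ, abs_of_nonpos h1, abs_of_nonneg h2, abs_of_nonneg hs,
        min_eq_left (by nlinarith : -ξ₁ * (ξ₁+ξ₂) ≤ ξ₂ * (ξ₁+ξ₂)),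
        min_eq_right (by nlinarith : -ξ₁ * (ξ₁+ξ₂) ≤ -ξ₁ * ξ₂),
        abs_of_nonpos (by nlinarith)]
      ring
    · rw [hΩ, abs_of_nonpos h1, abs_of_nonneg h2, abs_of_nonpos hs,
        min_eq_right (by nlinarith : ξ₂ * -(ξ₁+ξ₂) ≤ -ξ₁ * -(ξ₁+ξ₂)),
        min_eq_right (by nlinarith : ξ₂ * -(ξ₁+ξ₂) ≤ -ξ₁ * ξ₂),
        abs_of_nonneg (by nlinarith)]
      ring
  · have hs : ξ₁ + ξ₂ ≤ 0 := by linarith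
    rw [hΩ, abs_of_nonpos h1, abs_of_nonpos h2, abs_of_nonpos hs,
      min_eq_left (le_min (by nlinarith) (by nlinarith)),
      abs_of_nonpos (by nlinarith)]
    ring

lemma two_zpow_mul (a b : ℤ) : (2:ℝ) ^ a * 2 ^ b = 2 ^ (a + b) := (zpow_add₀ two_ne_zero a b).symm

lemma two_zpow_mono {a b : ℤ} (h : a ≤ b) : (2:ℝ) ^ a ≤ 2 ^ b := zpow_le_zpow_right₀ one_le_two h

lemma Ωres_bounds {k₁ k₂ k₃ : ℤ} {ξ₁ ξ₂ : ℝ} (h1 : ξ₁ ∈ Idy k₁) (h2 : ξ₂ ∈ Idy k₂)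
    (h3 : ξ₁ + ξ₂ ∈ Idy k₃) :
    (2:ℝ) ^ (k₁ + k₂ + k₃ - max k₁ (max k₂ k₃) - 1) ≤ |Ωres ξ₁ ξ₂| ∧
      |Ωres ξ₁ ξ₂| ≤ (2:ℝ) ^ (k₁ + k₂ + k₃ - max k₁ (max k₂ k₃) + 3) := by
  set K : ℤ := k₁ + k₂ + k₃ - max k₁ (max k₂ k₃) with hK
  obtain ⟨h1l, h1u⟩ := h1
  obtain ⟨h2l, h2u⟩ := h2
  obtain ⟨h3l, h3u⟩ := h3
  rw [Ωres_abs]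
  have pair_low : ∀ (a b : ℤ) (x y : ℝ), (2:ℝ)^(a-1) ≤ |x| → (2:ℝ)^(b-1) ≤ |y| →
      a + b - 2 ≥ K - 2 → (2:ℝ)^(K-2) ≤ |x| * |y| := by
    intro a b x y hx hy hab
    calc (2:ℝ)^(K-2) ≤ 2^((a-1)+(b-1)) := two_zpow_mono (by omega)
    _ = 2^(a-1) * 2^(b-1) := (two_zpow_mul _ _).symm
    _ ≤ |x| * |y| := mul_le_mul hx hy (by positivity) (abs_nonneg _)
  have pair_up : ∀ (a b : ℤ) (x y : ℝ), |x| ≤ (2:ℝ)^(a+1) → |y| ≤ (2:ℝ)^(b+1) →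
      |x| * |y| ≤ (2:ℝ)^(a+b+2) := by
    intro a b x y hx hy
    calc |x| * |y| ≤ (2:ℝ)^(a+1) * 2^(b+1) :=
          mul_le_mul hx hy (abs_nonneg _) (by positivity)
    _ = 2^(a+b+2) := by rw [two_zpow_mul]; ring_nf
  constructor
  · have l12 := pair_low k₁ k₂ ξ₁ ξ₂ h1l h2l (by omega)
    have l13 := pair_low k₁ k₃ ξ₁ (ξ₁+ξ₂) h1l h3l (by omega)
    have l23 := pair_low k₂ k₃ ξ₂ (ξ₁+ξ₂) h2l h3l (by omega)
    have : (2:ℝ)^(K-2) ≤ min (|ξ₁| * |ξ₂|) (min (|ξ₁| * |ξ₁ + ξ₂|) (|ξ₂| * |ξ₁ + ξ₂|)) :=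
      le_min l12 (le_min l13 l23)
    calc (2:ℝ)^(K-1) = 2 * 2^(K-2) := by
          rw [show K - 1 = 1 + (K-2) by ring, ← two_zpow_mul]; norm_num
    _ ≤ _ := by linarith
  · have hcase : k₁ + k₂ = K ∨ k₁ + k₃ = K ∨ k₂ + k₃ = K := by omega
    have key : min (|ξ₁| * |ξ₂|) (min (|ξ₁| * |ξ₁ + ξ₂|) (|ξ₂| * |ξ₁ + ξ₂|)) ≤ (2:ℝ)^(K+2) := by
      rcases hcase with hc | hc | hc
      · exact (min_le_left _ _).trans (by rw [← hc]; exact pair_up k₁ k₂ ξ₁ ξ₂ h1u h2u)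
      · exact ((min_le_right _ _).trans (min_le_left _ _)).trans
          (by rw [← hc]; exact pair_up k₁ k₃ ξ₁ (ξ₁+ξ₂) h1u h3u)
      · exact ((min_le_right _ _).trans (min_le_right _ _)).trans
          (by rw [← hc]; exact pair_up k₂ k₃ ξ₂ (ξ₁+ξ₂) h2u h3u)
    calc 2 * min (|ξ₁| * |ξ₂|) (min (|ξ₁| * |ξ₁ + ξ₂|) (|ξ₂| * |ξ₁ + ξ₂|))
        ≤ 2 * (2:ℝ)^(K+2) := by linarith
    _ = 2^(K+3) := by
      rw [show K + 3 = (K+2) + 1 by ring, zpow_add_one₀ (two_ne_zero : (2:ℝ) ≠ 0)]; ring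

lemma Itil_bounds {j : ℕ} {μ : ℝ} (h : μ ∈ Itil j) :
    |μ| ≤ (2:ℝ)^((j:ℤ)+1) ∧ (1 ≤ j → (2:ℝ)^((j:ℤ)-1) ≤ |μ|) := by
  by_cases hj : j = 0
  · subst hj
    simp only [Itil, if_pos rfl, Set.mem_Icc] at h
    refine ⟨?_, by omega⟩
    have h2 : (2:ℝ)^(((0:ℕ):ℤ)+1) = 2 := by norm_num
    rw [h2, abs_le]
    exact h
  · simp only [Itil, if_neg hj] at h
    exact ⟨h.2, fun _ => h.1⟩

lemma contra_helper {K : ℤ} {jt ja jb : ℕ} {μt μa μb Ω' : ℝ}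
    (h1 : 1 ≤ jt)
    (ht : |μt| ≤ |μa| + |μb| + |Ω'|)
    (hlt : 1 ≤ jt → (2:ℝ)^((jt:ℤ)-1) ≤ |μt|)
    (hau : |μa| ≤ (2:ℝ)^((ja:ℤ)+1)) (hbu : |μb| ≤ (2:ℝ)^((jb:ℤ)+1))
    (hΩu : |Ω'| ≤ (2:ℝ)^(K+3))
    (hK : K + 6 ≤ (jt:ℤ)) (hja : (ja:ℤ) ≤ (jt:ℤ) - 6) (hjb : (jb:ℤ) ≤ (jt:ℤ) - 6) : False := by
  set t : ℤ := (jt:ℤ) with htdef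
  have hpos : (0:ℝ) < 2^(t-5) := by positivity
  have e1 : (2:ℝ)^(t-1) = 16 * 2^(t-5) := by
    rw [show t - 1 = 4 + (t-5) by ring, ← two_zpow_mul]; norm_num
  have e2 : (2:ℝ)^(t-3) = 4 * 2^(t-5) := by
    rw [show t - 3 = 2 + (t-5) by ring, ← two_zpow_mul]; norm_num
  have c1 : |μa| ≤ 2^(t-5) := hau.trans (two_zpow_mono (by omega))
  have c2 : |μb| ≤ 2^(t-5) := hbu.trans (two_zpow_mono (by omega))
  have c3 : |Ω'| ≤ 4 * 2^(t-5) := by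
    have := hΩu.trans (two_zpow_mono (show K + 3 ≤ t - 3 by omega))
    linarith [e2]
  have hl := hlt h1
  linarith

theorem modulation_constraint (k₁ k₂ k₃ : ℤ) (j₁ j₂ j₃ : ℕ) (f g h : ℝ × ℝ → ℂ)
    (hf2 : MemLp f 2 volume) (hg2 : MemLp g 2 volume) (hh2 : MemLp h 2 volume)
    (hf : Function.support f ⊆ Idy k₁ ×ˢ Itil j₁)
    (hg : Function.support g ⊆ Idy k₂ ×ˢ Itil j₂)
    (hh : Function.support h ⊆ Idy k₃ ×ˢ Itil j₃)
    (hJ : J f g h ≠ 0) :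
    ((max j₁ (max j₂ j₃) : ℤ) ∈
        Set.Icc (k₁ + k₂ + k₃ - max k₁ (max k₂ k₃) - 5)
          (k₁ + k₂ + k₃ - max k₁ (max k₂ k₃) + 5)) ∨
      (k₁ + k₂ + k₃ - max k₁ (max k₂ k₃) + 5 ≤ (max j₁ (max j₂ j₃) : ℤ) ∧
        (max j₁ (max j₂ j₃) : ℤ) -
            ((j₁ : ℤ) + j₂ + j₃ - max j₁ (max j₂ j₃) - min j₁ (min j₂ j₃)) ≤ 5) := by
  unfold J at hJ
  obtain ⟨ξ₁, hJ⟩ := _root_.exists_ne_zero_of_integral_ne_zero hJ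
  obtain ⟨ξ₂, hJ⟩ := _root_.exists_ne_zero_of_integral_ne_zero hJ
  obtain ⟨μ₁, hJ⟩ := _root_.exists_ne_zero_of_integral_ne_zero hJ
  obtain ⟨μ₂, hJ⟩ := _root_.exists_ne_zero_of_integral_ne_zero hJ
  have hfne : f (ξ₁, μ₁) ≠ 0 := fun h0 => hJ (by simp [h0])
  have hgne : g (ξ₂, μ₂) ≠ 0 := fun h0 => hJ (by simp [h0])
  have hhne : h (ξ₁ + ξ₂, μ₁ + μ₂ + Ωres ξ₁ ξ₂) ≠ 0 := fun h0 => hJ (by simp [h0])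
  have m1 := hf (Function.mem_support.mpr hfne)
  have m2 := hg (Function.mem_support.mpr hgne)
  have m3 := hh (Function.mem_support.mpr hhne)
  rw [Set.mem_prod] at m1 m2 m3
  set Ω' : ℝ := Ωres ξ₁ ξ₂ with hΩ'
  set μ₃ : ℝ := μ₁ + μ₂ + Ω' with hμ₃
  set K : ℤ := k₁ + k₂ + k₃ - max k₁ (max k₂ k₃) with hKdef
  obtain ⟨hΩl, hΩu⟩ := Ωres_bounds m1.1 m2.1 m3.1
  obtain ⟨b1u, b1l⟩ := Itil_bounds m1.2
  obtain ⟨b2u, b2l⟩ := Itil_bounds m2.2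
  obtain ⟨b3u, b3l⟩ := Itil_bounds m3.2
  -- triangle inequalities
  have t1 : |μ₁| ≤ |μ₂| + |μ₃| + |Ω'| := by
    have : μ₁ = μ₃ - μ₂ - Ω' := by rw [hμ₃]; ring
    rw [this]
    calc |μ₃ - μ₂ - Ω'| ≤ |μ₃ - μ₂| + |Ω'| := abs_sub _ _
    _ ≤ |μ₃| + |μ₂| + |Ω'| := by linarith [abs_sub μ₃ μ₂]
    _ = _ := by ring
  have t2 : |μ₂| ≤ |μ₁| + |μ₃| + |Ω'| := by
    have : μ₂ = μ₃ - μ₁ - Ω' := by rw [hμ₃]; ring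
    rw [this]
    calc |μ₃ - μ₁ - Ω'| ≤ |μ₃ - μ₁| + |Ω'| := abs_sub _ _
    _ ≤ |μ₃| + |μ₁| + |Ω'| := by linarith [abs_sub μ₃ μ₁]
    _ = _ := by ring
  have t3 : |μ₃| ≤ |μ₁| + |μ₂| + |Ω'| := by
    rw [hμ₃]
    calc |μ₁ + μ₂ + Ω'| ≤ |μ₁ + μ₂| + |Ω'| := abs_add_le _ _
    _ ≤ |μ₁| + |μ₂| + |Ω'| := by linarith [abs_add_le μ₁ μ₂]
  have tΩ : |Ω'| ≤ |μ₁| + |μ₂| + |μ₃| := by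
    have : Ω' = μ₃ - μ₁ - μ₂ := by rw [hμ₃]; ring
    rw [this]
    calc |μ₃ - μ₁ - μ₂| ≤ |μ₃ - μ₁| + |μ₂| := abs_sub _ _
    _ ≤ |μ₃| + |μ₁| + |μ₂| := by linarith [abs_sub μ₃ μ₁]
    _ = _ := by ring
  set m : ℕ := max j₁ (max j₂ j₃) with hm
  -- Part A : K - 1 < m + 3
  have hA : K - 1 < (m : ℤ) + 3 := by
    have hb1 : |μ₁| ≤ (2:ℝ)^((m:ℤ)+1) := b1u.trans (two_zpow_mono (by omega))
    have hb2 : |μ₂| ≤ (2:ℝ)^((m:ℤ)+1) := b2u.trans (two_zpow_mono (by omega))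
    have hb3 : |μ₃| ≤ (2:ℝ)^((m:ℤ)+1) := b3u.trans (two_zpow_mono (by omega))
    have e3 : (2:ℝ)^((m:ℤ)+3) = 4 * 2^((m:ℤ)+1) := by
      rw [show (m:ℤ) + 3 = 2 + ((m:ℤ)+1) by ring, ← two_zpow_mul]; norm_num
    have hpos : (0:ℝ) < 2^((m:ℤ)+1) := by positivity
    have hlt : (2:ℝ)^(K-1) < 2^((m:ℤ)+3) := by
      calc (2:ℝ)^(K-1) ≤ |Ω'| := hΩl
      _ ≤ |μ₁| + |μ₂| + |μ₃| := tΩ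
      _ ≤ 3 * 2^((m:ℤ)+1) := by linarith
      _ < 2^((m:ℤ)+3) := by linarith
    by_contra hcon
    push_neg at hcon
    exact absurd (two_zpow_mono hcon) (not_le.mpr hlt)
  by_cases hc : (m : ℤ) ≤ K + 5
  · left
    rw [Set.mem_Icc]
    constructor <;> push_cast <;> omega
  · right
    push_neg at hc
    refine ⟨by push_cast; omega, ?_⟩
    by_contra hgap
    push_neg at hgap
    have hsplit : (j₁ = m ∧ (j₂:ℤ) ≤ (m:ℤ) - 6 ∧ (j₃:ℤ) ≤ (m:ℤ) - 6) ∨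
        (j₂ = m ∧ (j₁:ℤ) ≤ (m:ℤ) - 6 ∧ (j₃:ℤ) ≤ (m:ℤ) - 6) ∨
        (j₃ = m ∧ (j₁:ℤ) ≤ (m:ℤ) - 6 ∧ (j₂:ℤ) ≤ (m:ℤ) - 6) := by
      push_cast at hgap ⊢
      omega
    have hm6 : 1 ≤ m := by
      push_cast at hgap
      omega
    rcases hsplit with ⟨he, ha, hb⟩ | ⟨he, ha, hb⟩ | ⟨he, ha, hb⟩
    · exact contra_helper (K := K) (by omega) t1 b1l b2u b3u hΩu (by omega) (by omega) (by omega)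
    · exact contra_helper (K := K) (by omega) t2 b2l b1u b3u hΩu (by omega) (by omega) (by omega)
    · exact contra_helper (K := K) (by omega) t3 b3l b1u b2u hΩu (by omega) (by omega) (by omega)
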